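/- For a positive long root α, let x_α ∈ X_Ĩ be the unique minimal coset representative with x_α(α̃) = α. Then x_{−α} = s_α x_α and l(x_{−α}) = l(s_α) + l(x_α). -/

import Mathlib

open scoped RealInnerProductSpace

variable {V : Type*} [NormedAddCommGroup V] [InnerProductSpace ℝ V]

/-- An irreducible reduced (crystallographic) root system in a real inner product space. -/
structure IsIrredRootSystem (Φ : Set V) : Prop where
  finite : Φ.Finite
  nonempty : Φ.Nonempty
  nonzero : (0 : V) ∉ Φ
  spanning : Submodule.span ℝ Φ = ⊤
  reflect_mem : ∀ α ∈ Φ, ∀ β ∈ Φ, β - (2 * ⟪α, β⟫ / ⟪α, α⟫) • α ∈ Φ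
  crystallographic : ∀ α ∈ Φ, ∀ β ∈ Φ, ∃ n : ℤ, 2 * ⟪α, β⟫ / ⟪α, α⟫ = (n : ℝ)
  reduced : ∀ α ∈ Φ, ∀ t : ℝ, t • α ∈ Φ → t = 1 ∨ t = -1
  irreducible : ∀ Φ₁ Φ₂ : Set V, Φ₁ ∪ Φ₂ = Φ →
    (∀ α ∈ Φ₁, ∀ β ∈ Φ₂, ⟪α, β⟫ = 0) → Φ₁ = ∅ ∨ Φ₂ = ∅

/-- `Δ` is a base (system of simple roots) for `Φ`: it is contained in `Φ`, linearly
independent, and every root is an integral combination of `Δ` with coefficients all of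
the same sign. -/
def IsBase (Φ : Set V) (Δ : Finset V) : Prop :=
  (Δ : Set V) ⊆ Φ ∧ LinearIndependent ℝ (fun a : Δ => (a : V)) ∧
    ∀ γ ∈ Φ, ∃ c : V → ℤ, γ = ∑ α ∈ Δ, (c α : ℝ) • α ∧
      ((∀ α ∈ Δ, 0 ≤ c α) ∨ (∀ α ∈ Δ, c α ≤ 0))

/-- The positive roots with respect to the base `Δ`. -/
def posRoots (Φ : Set V) (Δ : Finset V) : Set V :=
  {γ ∈ Φ | ∃ c : V → ℕ, γ = ∑ α ∈ Δ, (c α : ℝ) • α}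

/-- The coroot `γ^∨ = 2γ/(γ|γ)` of a root `γ`. -/
noncomputable def coroot (γ : V) : V := (2 / ⟪γ, γ⟫) • γ

/-- The set of reflections in the roots of `Φ`, as linear automorphisms of `V`. -/
def reflections (Φ : Set V) : Set (V ≃ₗ[ℝ] V) :=
  {w | ∃ α ∈ Φ, ∀ v, w v = v - (2 * ⟪α, v⟫ / ⟪α, α⟫) • α}

/-- The Weyl group of `Φ`: the group generated by the reflections in the roots. -/
def weylGroup (Φ : Set V) : Subgroup (V ≃ₗ[ℝ] V) := Subgroup.closure (reflections Φ)

/-- The simple reflections with respect to the base `Δ`. -/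
def simpleReflections (Δ : Finset V) : Set (V ≃ₗ[ℝ] V) :=
  {w | ∃ α ∈ Δ, ∀ v, w v = v - (2 * ⟪α, v⟫ / ⟪α, α⟫) • α}

/-- The length of `w` with respect to the simple reflections determined by `Δ`. -/
noncomputable def len (Δ : Finset V) (w : V ≃ₗ[ℝ] V) : ℕ :=
  sInf {n | ∃ L : List (V ≃ₗ[ℝ] V),
    (∀ s ∈ L, s ∈ simpleReflections Δ) ∧ L.length = n ∧ L.prod = w}

/-- `t` is the highest root of `Φ` with respect to the base `Δ`. -/
def IsHighestRoot (Φ : Set V) (Δ : Finset V) (t : V) : Prop :=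
  t ∈ Φ ∧ ∀ α ∈ Φ, ∃ c : V → ℕ, t - α = ∑ a ∈ Δ, (c a : ℝ) • a

/-- The set `X_Ĩ` of minimal coset representatives of `W/W_Ĩ`, where `Ĩ` is the set of
simple roots orthogonal to the highest root `t`. -/
def minCosetReps (Φ : Set V) (Δ : Finset V) (t : V) : Set (V ≃ₗ[ℝ] V) :=
  {w | w ∈ weylGroup Φ ∧ ∀ γ ∈ Φ,
    (∃ c : V → ℕ, (∀ a ∈ Δ, ⟪t, a⟫ ≠ 0 → c a = 0) ∧ γ = ∑ a ∈ Δ, (c a : ℝ) • a) →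
      w γ ∈ posRoots Φ Δ}

/-- Reflection in `γ` as a linear map. -/
noncomputable def rfLM (γ : V) : V →ₗ[ℝ] V where
  toFun v := v - (2 * ⟪γ, v⟫ / ⟪γ, γ⟫) • γ
  map_add' u v := by
    simp only [inner_add_right, mul_add, add_div, add_smul]
    abel
  map_smul' r v := by
    simp only [real_inner_smul_right, RingHom.id_apply, smul_sub, smul_smul]
    congr 2
    ring

lemma rfLM_invol (γ v : V) : rfLM γ (rfLM γ v) = v := by
  rcases eq_or_ne γ 0 with h | h
  · simp [rfLM, h]
  · have hg : ⟪γ, γ⟫ ≠ 0 := inner_self_ne_zero.mpr h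
    simp only [rfLM, LinearMap.coe_mk, AddHom.coe_mk, inner_sub_right, real_inner_smul_right]
    have h1 : ⟪γ, v⟫ - 2 * ⟪γ, v⟫ / ⟪γ, γ⟫ * ⟪γ, γ⟫ = -⟪γ, v⟫ := by field_simp; ring
    rw [h1, show (2 : ℝ) * -⟪γ, v⟫ / ⟪γ, γ⟫ = -(2 * ⟪γ, v⟫ / ⟪γ, γ⟫) by ring]
    simp [sub_eq_add_neg, neg_smul]

/-- Reflection in `γ` as a linear automorphism. -/
noncomputable def rf (γ : V) : V ≃ₗ[ℝ] V :=
  LinearEquiv.ofLinear (rfLM γ) (rfLM γ)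
    (LinearMap.ext fun v => rfLM_invol γ v) (LinearMap.ext fun v => rfLM_invol γ v)

lemma inner_self_pos' {x : V} (h : x ≠ 0) : (0:ℝ) < ⟪x, x⟫ :=
  lt_of_le_of_ne real_inner_self_nonneg (Ne.symm (inner_self_ne_zero.mpr h))

lemma rf_apply (γ v : V) : rf γ v = v - (2 * ⟪γ, v⟫ / ⟪γ, γ⟫) • γ := rfl

lemma rf_rf (γ v : V) : rf γ (rf γ v) = v := rfLM_invol γ v

lemma rf_mul_self (γ : V) : rf γ * rf γ = 1 := by
  ext v; exact rf_rf γ v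

lemma rf_inv (γ : V) : (rf γ)⁻¹ = rf γ := by
  rw [inv_eq_iff_mul_eq_one]; exact rf_mul_self γ

lemma rf_neg (γ : V) : rf (-γ) = rf γ := by
  ext v
  simp [rf_apply, inner_neg_neg, inner_neg_left, mul_neg, neg_div, neg_smul, smul_neg]

lemma rf_self (γ : V) (h : γ ≠ 0) : rf γ γ = -γ := by
  have hg : ⟪γ, γ⟫ ≠ 0 := inner_self_ne_zero.mpr h
  rw [rf_apply, mul_div_assoc, div_self hg, mul_one, two_smul]
  abel

lemma rf_inner (γ u v : V) : ⟪rf γ u, rf γ v⟫ = ⟪u, v⟫ := by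
  rcases eq_or_ne γ 0 with h | h
  · simp [rf_apply, h]
  · have hg : ⟪γ, γ⟫ ≠ 0 := inner_self_ne_zero.mpr h
    simp only [rf_apply, inner_sub_left, inner_sub_right, real_inner_smul_left,
      real_inner_smul_right]
    rw [real_inner_comm γ u]
    field_simp
    ring

lemma rf_orth_fix (γ v : V) (h : ⟪γ, v⟫ = 0) : rf γ v = v := by
  simp [rf_apply, h]

section

variable {Φ : Set V}

lemma mem_reflections_iff {w : V ≃ₗ[ℝ] V} :
    w ∈ reflections Φ ↔ ∃ γ ∈ Φ, w = rf γ := by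
  constructor
  · rintro ⟨γ, hγ, h⟩
    exact ⟨γ, hγ, LinearEquiv.ext fun v => (h v).trans (rf_apply γ v).symm⟩
  · rintro ⟨γ, hγ, rfl⟩
    exact ⟨γ, hγ, fun v => rf_apply γ v⟩

lemma mulApply (f g : V ≃ₗ[ℝ] V) (v : V) : (f * g) v = f (g v) := rfl

lemma invApply (f : V ≃ₗ[ℝ] V) (v : V) : f (f⁻¹ v) = v := f.apply_symm_apply v

lemma invApply' (f : V ≃ₗ[ℝ] V) (v : V) : f⁻¹ (f v) = v := f.symm_apply_apply v

lemma rf_mem_weyl {γ : V} (h : γ ∈ Φ) : rf γ ∈ weylGroup Φ :=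
  Subgroup.subset_closure (mem_reflections_iff.mpr ⟨γ, h, rfl⟩)

/-- Stability of `Φ` and the inner product under the Weyl group. -/
lemma weyl_good (hΦ : IsIrredRootSystem Φ) {w : V ≃ₗ[ℝ] V} (hw : w ∈ weylGroup Φ) :
    (∀ u v, ⟪w u, w v⟫ = ⟪u, v⟫) ∧ (∀ β ∈ Φ, w β ∈ Φ) ∧
      (∀ u v, ⟪w⁻¹ u, w⁻¹ v⟫ = ⟪u, v⟫) ∧ (∀ β ∈ Φ, w⁻¹ β ∈ Φ) := by
  refine Subgroup.closure_induction ?_ ?_ ?_ ?_ hw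
  · intro x hx
    rw [mem_reflections_iff] at hx
    obtain ⟨γ, hγ, rfl⟩ := hx
    refine ⟨fun u v => rf_inner γ u v, fun β hβ => ?_, ?_, ?_⟩
    · rw [rf_apply]; exact hΦ.reflect_mem γ hγ β hβ
    · rw [rf_inv]; exact fun u v => rf_inner γ u v
    · rw [rf_inv]; intro β hβ; rw [rf_apply]; exact hΦ.reflect_mem γ hγ β hβ
  · simp
  · rintro x y hx hy ⟨hx1, hx2, hx3, hx4⟩ ⟨hy1, hy2, hy3, hy4⟩
    refine ⟨fun u v => ?_, fun β hβ => ?_, fun u v => ?_, fun β hβ => ?_⟩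
    · rw [mulApply, mulApply, hx1, hy1]
    · rw [mulApply]; exact hx2 _ (hy2 β hβ)
    · rw [mul_inv_rev, mulApply, mulApply, hy3, hx3]
    · rw [mul_inv_rev, mulApply]; exact hy4 _ (hx4 β hβ)
  · rintro x hx ⟨hx1, hx2, hx3, hx4⟩
    exact ⟨hx3, hx4, by simpa using hx1, by simpa using hx2⟩

lemma weyl_inner (hΦ : IsIrredRootSystem Φ) {w : V ≃ₗ[ℝ] V} (hw : w ∈ weylGroup Φ)
    (u v : V) : ⟪w u, w v⟫ = ⟪u, v⟫ := (weyl_good hΦ hw).1 u v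

lemma weyl_maps (hΦ : IsIrredRootSystem Φ) {w : V ≃ₗ[ℝ] V} (hw : w ∈ weylGroup Φ)
    {β : V} (hβ : β ∈ Φ) : w β ∈ Φ := (weyl_good hΦ hw).2.1 β hβ

/-- Conjugation formula for reflections. -/
lemma rf_conj (hΦ : IsIrredRootSystem Φ) {w : V ≃ₗ[ℝ] V} (hw : w ∈ weylGroup Φ) (γ : V) :
    rf (w γ) = w * rf γ * w⁻¹ := by
  ext v
  rw [mulApply, mulApply, rf_apply, rf_apply, map_sub, map_smul, invApply]
  have h1 : ⟪w γ, v⟫ = ⟪γ, w⁻¹ v⟫ := by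
    conv_lhs => rw [← invApply w v]
    exact (weyl_good hΦ hw).1 γ (w⁻¹ v)
  rw [h1, (weyl_good hΦ hw).1 γ γ]
end

section
variable {Φ : Set V} {Δ : Finset V}

lemma root_ne_zero (hΦ : IsIrredRootSystem Φ) {γ : V} (h : γ ∈ Φ) : γ ≠ 0 :=
  fun e => hΦ.nonzero (e ▸ h)

lemma pos_mem {γ : V} (h : γ ∈ posRoots Φ Δ) : γ ∈ Φ := h.1

lemma neg_mem (hΦ : IsIrredRootSystem Φ) {γ : V} (hγ : γ ∈ Φ) : -γ ∈ Φ := by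
  have := hΦ.reflect_mem γ hγ γ hγ
  rwa [← rf_apply, rf_self γ (root_ne_zero hΦ hγ)] at this

lemma coeff_unique (hΔ : IsBase Φ Δ) (c d : V → ℝ)
    (h : ∑ a ∈ Δ, c a • a = ∑ a ∈ Δ, d a • a) : ∀ a ∈ Δ, c a = d a := by
  have li := hΔ.2.1
  rw [linearIndependent_iff'] at li
  intro a ha
  have h0 : ∑ x ∈ (Finset.univ : Finset {x // x ∈ Δ}), (c x.1 - d x.1) • (x.1 : V) = 0 := by
    simp only [sub_smul, Finset.sum_sub_distrib, Finset.univ_eq_attach]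
    rw [Finset.sum_attach Δ (fun x => c x • x), Finset.sum_attach Δ (fun x => d x • x), h,
      sub_self]
  have := li Finset.univ (fun x => c x.1 - d x.1) h0 ⟨a, ha⟩ (Finset.mem_univ _)
  exact sub_eq_zero.mp this

lemma mem_pos_of_int {γ : V} (hγ : γ ∈ Φ) (c : V → ℤ)
    (hrep : γ = ∑ a ∈ Δ, (c a : ℝ) • a) (hc : ∀ a ∈ Δ, 0 ≤ c a) : γ ∈ posRoots Φ Δ := by
  refine ⟨hγ, fun a => (c a).toNat, ?_⟩
  rw [hrep]
  refine Finset.sum_congr rfl fun a ha => ?_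
  have : (((c a).toNat : ℕ) : ℝ) = ((c a : ℤ) : ℝ) := by
    exact_mod_cast congrArg (fun n : ℤ => (n : ℝ)) (Int.toNat_of_nonneg (hc a ha))
  rw [this]

lemma pos_or_neg (hΦ : IsIrredRootSystem Φ) (hΔ : IsBase Φ Δ) {γ : V} (hγ : γ ∈ Φ) :
    γ ∈ posRoots Φ Δ ∨ -γ ∈ posRoots Φ Δ := by
  obtain ⟨c, hrep, hsign | hsign⟩ := hΔ.2.2 γ hγ
  · exact Or.inl (mem_pos_of_int hγ c hrep hsign)
  · refine Or.inr (mem_pos_of_int (neg_mem hΦ hγ) (fun a => -c a) ?_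
      (fun a ha => neg_nonneg.mpr (hsign a ha)))
    rw [hrep, ← Finset.sum_neg_distrib]
    exact Finset.sum_congr rfl fun a _ => by push_cast; rw [neg_smul]

lemma not_pos_both (hΦ : IsIrredRootSystem Φ) (hΔ : IsBase Φ Δ) {γ : V}
    (h1 : γ ∈ posRoots Φ Δ) (h2 : -γ ∈ posRoots Φ Δ) : False := by
  obtain ⟨hγ, c, hc⟩ := h1
  obtain ⟨_, d, hd⟩ := h2
  have hsum : ∑ a ∈ Δ, ((c a : ℝ) + (d a : ℝ)) • a = ∑ a ∈ Δ, (0 : ℝ) • a := by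
    simp only [add_smul, Finset.sum_add_distrib, zero_smul, Finset.sum_const_zero]
    rw [← hc, ← hd, add_neg_cancel]
  have hz := coeff_unique hΔ _ _ hsum
  have hγ0 : γ = 0 := by
    rw [hc]
    refine Finset.sum_eq_zero fun a ha => ?_
    have h1 := hz a ha
    have h2 : (0:ℝ) ≤ (c a : ℝ) := Nat.cast_nonneg _
    have h3 : (0:ℝ) ≤ (d a : ℝ) := Nat.cast_nonneg _
    have : (c a : ℝ) = 0 := by linarith
    rw [this, zero_smul]
  exact hΦ.nonzero (hγ0 ▸ hγ)

open Classical in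
lemma simple_pos (hΔ : IsBase Φ Δ) {a : V} (ha : a ∈ Δ) : a ∈ posRoots Φ Δ := by
  refine ⟨hΔ.1 ha, fun v => if v = a then 1 else 0, ?_⟩
  rw [Finset.sum_congr rfl (g := fun b => if b = a then b else 0)
    (fun b _ => by by_cases h : b = a <;> simp [h])]
  simp [Finset.sum_ite_eq', ha]

open Classical in
lemma rf_simple_pos (hΦ : IsIrredRootSystem Φ) (hΔ : IsBase Φ Δ) {a β : V} (ha : a ∈ Δ)
    (hβ : β ∈ posRoots Φ Δ) (hne : β ≠ a) :
    rf a β ∈ posRoots Φ Δ ∧ rf a β ≠ a := by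
  classical
  obtain ⟨hβΦ, c, hc⟩ := hβ
  have haΦ : a ∈ Φ := hΔ.1 ha
  have ha0 : a ≠ 0 := root_ne_zero hΦ haΦ
  obtain ⟨k, hk⟩ := hΦ.crystallographic a haΦ β hβΦ
  have hmem : rf a β ∈ Φ := by rw [rf_apply]; exact hΦ.reflect_mem a haΦ β hβΦ
  obtain ⟨b, hb, hbne, hcb⟩ : ∃ b ∈ Δ, b ≠ a ∧ 0 < c b := by
    by_contra hcon
    push_neg at hcon
    have hβa : β = (c a : ℝ) • a := by
      rw [hc, Finset.sum_eq_single a (fun b hb hbne' => by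
        have := hcon b hb hbne'
        simp [Nat.le_zero.mp this]) (fun h => absurd ha h)]
    rcases hΦ.reduced a haΦ (c a) (hβa ▸ hβΦ) with h1 | h1
    · exact hne (by rw [hβa, h1, one_smul])
    · have h2 : (0:ℝ) ≤ (c a : ℝ) := Nat.cast_nonneg _
      rw [h1] at h2; linarith
  have hstep : rf a β = β - (k:ℝ) • a := by rw [rf_apply, hk]
  have hite : ∑ x ∈ Δ, (if x = a then (k:ℝ) else 0) • x = (k:ℝ) • a := by
    rw [Finset.sum_congr rfl (g := fun x => if x = a then (k:ℝ) • a else 0)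
      (fun x _ => by by_cases h : x = a <;> simp [h])]
    simp [Finset.sum_ite_eq', ha]
  have hrep : rf a β = ∑ x ∈ Δ, ((c x : ℝ) - if x = a then (k:ℝ) else 0) • x := by
    rw [hstep, hc, ← hite, ← Finset.sum_sub_distrib]
    exact Finset.sum_congr rfl fun x hx => (sub_smul _ _ _).symm
  obtain ⟨d, hd, hsign⟩ := hΔ.2.2 _ hmem
  have huniq := coeff_unique hΔ (fun x => (d x : ℝ))
    (fun x => (c x : ℝ) - if x = a then (k:ℝ) else 0) (hd.symm.trans hrep)
  have hdb : (0:ℝ) < d b := by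
    have h1 := huniq b hb
    simp only [if_neg hbne, sub_zero] at h1
    have h2 : (0:ℝ) < (c b : ℝ) := by exact_mod_cast hcb
    linarith
  have hsign' : ∀ x ∈ Δ, 0 ≤ d x := by
    rcases hsign with h | h
    · exact h
    · exfalso
      have := h b hb
      have : (d b : ℝ) ≤ 0 := by exact_mod_cast this
      linarith
  refine ⟨mem_pos_of_int hmem d hd hsign', fun h => ?_⟩
  have hβna : β = -a := by rw [← rf_rf a β, h, rf_self a ha0]
  exact not_pos_both hΦ hΔ (simple_pos hΔ ha) (hβna ▸ ⟨hβΦ, c, hc⟩)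

lemma rf_simple_neg_only (hΦ : IsIrredRootSystem Φ) (hΔ : IsBase Φ Δ) {a β : V} (ha : a ∈ Δ)
    (hβ : β ∈ posRoots Φ Δ) (h : rf a β ∉ posRoots Φ Δ) : β = a := by
  by_contra hne
  exact h (rf_simple_pos hΦ hΔ ha hβ hne).1
end

section
variable {Φ : Set V} {Δ : Finset V}

/-- `L` is a word in the reflections attached to elements of `A`. -/
def IsWordOn (A : Finset V) (L : List (V ≃ₗ[ℝ] V)) : Prop := ∀ s ∈ L, ∃ a ∈ A, s = rf a

lemma isWordOn_nil {A : Finset V} : IsWordOn A ([] : List (V ≃ₗ[ℝ] V)) := by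
  intro s hs; simp at hs

lemma isWordOn_append {A : Finset V} {L M : List (V ≃ₗ[ℝ] V)} (hL : IsWordOn A L)
    (hM : IsWordOn A M) : IsWordOn A (L ++ M) := by
  intro s hs
  rcases List.mem_append.mp hs with h | h
  · exact hL s h
  · exact hM s h

lemma word_prod_mem_weyl (hΔ : IsBase Φ Δ) {A : Finset V} (hA : A ⊆ Δ) :
    ∀ L : List (V ≃ₗ[ℝ] V), IsWordOn A L → L.prod ∈ weylGroup Φ := by
  intro L
  induction L with
  | nil => intro _; rw [List.prod_nil]; exact Subgroup.one_mem _
  | cons s L ih =>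
    intro hL
    obtain ⟨a, haA, rfl⟩ := hL s List.mem_cons_self
    rw [List.prod_cons]
    exact Subgroup.mul_mem _ (rf_mem_weyl (hΔ.1 (hA haA)))
      (ih fun x hx => hL x (List.mem_cons_of_mem _ hx))

lemma word_reverse_prod {A : Finset V} :
    ∀ L : List (V ≃ₗ[ℝ] V), IsWordOn A L → L.reverse.prod = (L.prod)⁻¹ := by
  intro L
  induction L with
  | nil => intro _; simp
  | cons s L ih =>
    intro hL
    obtain ⟨a, haA, hs⟩ := hL s List.mem_cons_self
    rw [List.reverse_cons, List.prod_append, List.prod_cons, List.prod_nil, mul_one,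
      ih (fun x hx => hL x (List.mem_cons_of_mem _ hx)), List.prod_cons, mul_inv_rev, hs, rf_inv]

lemma isWordOn_reverse {A : Finset V} {L : List (V ≃ₗ[ℝ] V)} (hL : IsWordOn A L) :
    IsWordOn A L.reverse := fun s hs => hL s (List.mem_reverse.mp hs)

/-- Every positive root's reflection is a product of simple reflections
(induction on height). -/
lemma rf_word_aux (hΦ : IsIrredRootSystem Φ) (hΔ : IsBase Φ Δ) :
    ∀ n : ℕ, ∀ γ, γ ∈ posRoots Φ Δ → ∀ c : V → ℕ, γ = ∑ a ∈ Δ, (c a : ℝ) • a →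
      ∑ a ∈ Δ, c a = n → ∃ L, IsWordOn Δ L ∧ L.prod = rf γ := by
  classical
  intro n
  induction n using Nat.strong_induction_on with
  | _ n ih =>
    intro γ hγ c hrep hht
    have hγΦ : γ ∈ Φ := hγ.1
    have hγ0 : γ ≠ 0 := root_ne_zero hΦ hγΦ
    have hip : (0:ℝ) < ⟪γ, γ⟫ := inner_self_pos' hγ0
    obtain ⟨a, ha, hpos⟩ : ∃ a ∈ Δ, (0:ℝ) < ⟪γ, a⟫ := by
      by_contra hcon
      push_neg at hcon
      have hle : ⟪γ, γ⟫ ≤ 0 := by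
        conv_lhs => rw [show ⟪γ, γ⟫ = ⟪γ, ∑ a ∈ Δ, (c a : ℝ) • a⟫ from by rw [← hrep]]
        rw [inner_sum]
        refine Finset.sum_nonpos fun x hx => ?_
        rw [real_inner_smul_right]
        exact mul_nonpos_of_nonneg_of_nonpos (Nat.cast_nonneg _) (hcon x hx)
      linarith
    have haΦ : a ∈ Φ := hΔ.1 ha
    have ha0 : a ≠ 0 := root_ne_zero hΦ haΦ
    by_cases heq : γ = a
    · refine ⟨[rf a], ?_, by rw [List.prod_singleton, heq]⟩
      intro s hs
      rw [List.mem_singleton] at hs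
      exact ⟨a, ha, hs⟩
    · have hperm := rf_simple_pos hΦ hΔ ha hγ heq
      obtain ⟨k, hk⟩ := hΦ.crystallographic a haΦ γ hγΦ
      have hkpos : (0:ℝ) < (k:ℝ) := by
        rw [← hk]
        have h2 : (0:ℝ) < ⟪a, γ⟫ := by rwa [real_inner_comm]
        have h3 : (0:ℝ) < ⟪a, a⟫ := inner_self_pos' ha0
        positivity
      obtain ⟨hγ'Φ, d, hd⟩ := hperm.1
      -- compare coefficients
      have hstep : rf a γ = γ - (k:ℝ) • a := by rw [rf_apply, hk]
      have hite : ∑ x ∈ Δ, (if x = a then (k:ℝ) else 0) • x = (k:ℝ) • a := by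
        rw [Finset.sum_congr rfl (g := fun x => if x = a then (k:ℝ) • a else 0)
          (fun x _ => by by_cases h : x = a <;> simp [h])]
        simp [Finset.sum_ite_eq', ha]
      have hrep' : rf a γ = ∑ x ∈ Δ, ((c x : ℝ) - if x = a then (k:ℝ) else 0) • x := by
        rw [hstep, hrep, ← hite, ← Finset.sum_sub_distrib]
        exact Finset.sum_congr rfl fun x hx => (sub_smul _ _ _).symm
      have huniq := coeff_unique hΔ (fun x => (d x : ℝ))
        (fun x => (c x : ℝ) - if x = a then (k:ℝ) else 0) (hd.symm.trans hrep')
      have hsum : (∑ x ∈ Δ, (d x : ℝ)) = (∑ x ∈ Δ, (c x : ℝ)) - (k:ℝ) := by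
        rw [Finset.sum_congr rfl (fun x hx => huniq x hx), Finset.sum_sub_distrib]
        congr 1
        rw [Finset.sum_ite_eq', if_pos ha]
      have hk1 : (1:ℝ) ≤ (k:ℝ) := by
        have : (0:ℤ) < k := by exact_mod_cast hkpos
        exact_mod_cast this
      have hlt : ∑ x ∈ Δ, d x < n := by
        have hc1 : ((∑ x ∈ Δ, d x : ℕ) : ℝ) < ((n : ℕ) : ℝ) := by
          rw [← hht]
          push_cast
          push_cast at hsum
          linarith
        exact_mod_cast hc1
      obtain ⟨M, hM, hMp⟩ := ih _ hlt (rf a γ) hperm.1 d hd rfl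
      refine ⟨[rf a] ++ M ++ [rf a], ?_, ?_⟩
      · refine isWordOn_append (isWordOn_append ?_ hM) ?_ <;>
          · intro s hs
            rw [List.mem_singleton] at hs
            exact ⟨a, ha, hs⟩
      · simp only [List.prod_append, List.prod_cons, List.prod_nil, mul_one]
        rw [hMp]
        have hγeq : γ = rf a (rf a γ) := (rf_rf a γ).symm
        conv_rhs => rw [hγeq]
        rw [rf_conj hΦ (rf_mem_weyl haΦ) (rf a γ), rf_inv]

lemma weyl_word (hΦ : IsIrredRootSystem Φ) (hΔ : IsBase Φ Δ) {w : V ≃ₗ[ℝ] V}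
    (hw : w ∈ weylGroup Φ) : ∃ L, IsWordOn Δ L ∧ L.prod = w := by
  refine Subgroup.closure_induction ?_ ?_ ?_ ?_ hw
  · intro x hx
    rw [mem_reflections_iff] at hx
    obtain ⟨γ, hγ, rfl⟩ := hx
    rcases pos_or_neg hΦ hΔ hγ with h | h
    · obtain ⟨_, c, hc⟩ := id h
      exact rf_word_aux hΦ hΔ _ γ h c hc rfl
    · obtain ⟨_, c, hc⟩ := id h
      obtain ⟨L, hL, hLp⟩ := rf_word_aux hΦ hΔ _ (-γ) h c hc rfl
      exact ⟨L, hL, by rw [hLp, rf_neg]⟩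
  · exact ⟨[], isWordOn_nil, rfl⟩
  · rintro x y _ _ ⟨L, hL, hLp⟩ ⟨M, hM, hMp⟩
    exact ⟨L ++ M, isWordOn_append hL hM, by rw [List.prod_append, hLp, hMp]⟩
  · rintro x _ ⟨L, hL, hLp⟩
    exact ⟨L.reverse, isWordOn_reverse hL, by rw [word_reverse_prod L hL, hLp]⟩

/-- The inversion set of `w`. -/
def invRoots (Φ : Set V) (Δ : Finset V) (w : V ≃ₗ[ℝ] V) : Set V :=
  {γ | γ ∈ posRoots Φ Δ ∧ -(w γ) ∈ posRoots Φ Δ}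

/-- The number of inversions of `w`. -/
noncomputable def Ninv (Φ : Set V) (Δ : Finset V) (w : V ≃ₗ[ℝ] V) : ℕ :=
  (invRoots Φ Δ w).ncard

lemma invRoots_finite (hΦ : IsIrredRootSystem Φ) (w : V ≃ₗ[ℝ] V) :
    (invRoots Φ Δ w).Finite := hΦ.finite.subset fun γ h => h.1.1

lemma invRoots_one (hΦ : IsIrredRootSystem Φ) (hΔ : IsBase Φ Δ) :
    invRoots Φ Δ (1 : V ≃ₗ[ℝ] V) = ∅ := by
  ext γ
  simp only [invRoots, Set.mem_setOf_eq, Set.mem_empty_iff_false, iff_false, not_and]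
  intro h1 h2
  exact not_pos_both hΦ hΔ h1 h2

lemma Ninv_one (hΦ : IsIrredRootSystem Φ) (hΔ : IsBase Φ Δ) :
    Ninv Φ Δ (1 : V ≃ₗ[ℝ] V) = 0 := by
  rw [Ninv, invRoots_one hΦ hΔ, Set.ncard_empty]

lemma invRoots_mul_rf_pos (hΦ : IsIrredRootSystem Φ) (hΔ : IsBase Φ Δ) {w : V ≃ₗ[ℝ] V}
    {a : V} (ha : a ∈ Δ) (hwa : w a ∈ posRoots Φ Δ) :
    invRoots Φ Δ (w * rf a) = insert a (rf a '' invRoots Φ Δ w) ∧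
      a ∉ rf a '' invRoots Φ Δ w := by
  have haΦ : a ∈ Φ := hΔ.1 ha
  have ha0 : a ≠ 0 := root_ne_zero hΦ haΦ
  have hnotinv : a ∉ invRoots Φ Δ w := fun h => not_pos_both hΦ hΔ hwa h.2
  have himg : a ∉ rf a '' invRoots Φ Δ w := by
    rintro ⟨δ, hδ, hδa⟩
    have hδne : δ ≠ a := fun h => hnotinv (h ▸ hδ)
    exact (rf_simple_pos hΦ hΔ ha hδ.1 hδne).2 hδa
  refine ⟨?_, himg⟩
  ext γ
  simp only [invRoots, Set.mem_setOf_eq, Set.mem_insert_iff, Set.mem_image]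
  constructor
  · rintro ⟨hγp, hγn⟩
    by_cases heq : γ = a
    · exact Or.inl heq
    · refine Or.inr ⟨rf a γ, ⟨(rf_simple_pos hΦ hΔ ha hγp heq).1, ?_⟩, rf_rf a γ⟩
      rwa [mulApply] at hγn
  · rintro (heqa | ⟨δ, ⟨hδp, hδn⟩, rfl⟩)
    · rw [heqa]
      refine ⟨simple_pos hΔ ha, ?_⟩
      rw [mulApply, rf_self a ha0, map_neg, neg_neg]
      exact hwa
    · have hδne : δ ≠ a := fun h => not_pos_both hΦ hΔ hwa (h ▸ hδn)
      refine ⟨(rf_simple_pos hΦ hΔ ha hδp hδne).1, ?_⟩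
      rwa [mulApply, rf_rf]

lemma Ninv_mul_rf_pos (hΦ : IsIrredRootSystem Φ) (hΔ : IsBase Φ Δ) {w : V ≃ₗ[ℝ] V}
    {a : V} (ha : a ∈ Δ) (hwa : w a ∈ posRoots Φ Δ) :
    Ninv Φ Δ (w * rf a) = Ninv Φ Δ w + 1 := by
  obtain ⟨hset, hnot⟩ := invRoots_mul_rf_pos hΦ hΔ ha hwa
  rw [Ninv, hset, Set.ncard_insert_of_notMem hnot ((invRoots_finite hΦ w).image _),
    Set.ncard_image_of_injective _ (rf a).injective]
  rfl

lemma Ninv_mul_rf_neg (hΦ : IsIrredRootSystem Φ) (hΔ : IsBase Φ Δ) {w : V ≃ₗ[ℝ] V}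
    {a : V} (ha : a ∈ Δ) (hwa : -(w a) ∈ posRoots Φ Δ) :
    Ninv Φ Δ w = Ninv Φ Δ (w * rf a) + 1 := by
  have ha0 : a ≠ 0 := root_ne_zero hΦ (hΔ.1 ha)
  have h1 : (w * rf a) a ∈ posRoots Φ Δ := by
    rw [mulApply, rf_self a ha0, map_neg]
    exact hwa
  have h2 := Ninv_mul_rf_pos hΦ hΔ ha h1
  rwa [mul_assoc, rf_mul_self, mul_one] at h2

lemma Ninv_le_word (hΦ : IsIrredRootSystem Φ) (hΔ : IsBase Φ Δ) :
    ∀ L : List (V ≃ₗ[ℝ] V), IsWordOn Δ L → Ninv Φ Δ L.prod ≤ L.length := by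
  intro L
  induction L using List.reverseRecOn with
  | nil => intro _; rw [List.prod_nil]; rw [Ninv_one hΦ hΔ]; simp
  | append_singleton M s ih =>
    intro hL
    have hM : IsWordOn Δ M := fun x hx => hL x (by simp [hx])
    obtain ⟨a, ha, hs⟩ := hL s (by simp)
    subst hs
    have hw : M.prod ∈ weylGroup Φ := word_prod_mem_weyl hΔ (Finset.Subset.refl Δ) M hM
    rw [List.prod_append, List.prod_singleton]
    have hih := ih hM
    rw [List.length_append, List.length_singleton]
    rcases pos_or_neg hΦ hΔ (weyl_maps hΦ hw (hΔ.1 ha)) with h | h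
    · rw [Ninv_mul_rf_pos hΦ hΔ ha h]
      omega
    · have h2 := Ninv_mul_rf_neg hΦ hΔ ha h
      omega

end

section
variable {Φ : Set V} {Δ : Finset V}

lemma oneApply (v : V) : (1 : V ≃ₗ[ℝ] V) v = v := rfl

/-- Minimal word length over reflections from `A`. -/
noncomputable def lenW (A : Finset V) (w : V ≃ₗ[ℝ] V) : ℕ :=
  sInf {n | ∃ L : List (V ≃ₗ[ℝ] V), IsWordOn A L ∧ L.length = n ∧ L.prod = w}

lemma len_eq_lenW (Δ : Finset V) (w : V ≃ₗ[ℝ] V) : len Δ w = lenW Δ w := by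
  unfold len lenW
  congr 1
  ext n
  constructor
  · rintro ⟨L, hL, h1, h2⟩
    refine ⟨L, fun s hs => ?_, h1, h2⟩
    obtain ⟨a, ha, hf⟩ := hL s hs
    exact ⟨a, ha, LinearEquiv.ext fun v => (hf v).trans (rf_apply a v).symm⟩
  · rintro ⟨L, hL, h1, h2⟩
    refine ⟨L, fun s hs => ?_, h1, h2⟩
    obtain ⟨a, ha, rfl⟩ := hL s hs
    exact ⟨a, ha, fun v => rf_apply a v⟩

lemma lenW_le {A : Finset V} {L : List (V ≃ₗ[ℝ] V)} {w : V ≃ₗ[ℝ] V}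
    (hL : IsWordOn A L) (hp : L.prod = w) : lenW A w ≤ L.length :=
  Nat.sInf_le ⟨L, hL, rfl, hp⟩

lemma lenW_min {A : Finset V} {w : V ≃ₗ[ℝ] V} (hw : ∃ L, IsWordOn A L ∧ L.prod = w) :
    ∃ L, IsWordOn A L ∧ L.length = lenW A w ∧ L.prod = w := by
  obtain ⟨L, hL, hp⟩ := hw
  exact Nat.sInf_mem (⟨L.length, L, hL, rfl, hp⟩ :
    {n | ∃ L, IsWordOn A L ∧ L.length = n ∧ L.prod = w}.Nonempty)

lemma lenW_one {A : Finset V} : lenW A (1 : V ≃ₗ[ℝ] V) = 0 :=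
  Nat.le_zero.mp (lenW_le isWordOn_nil rfl)

lemma lenW_eq_zero {A : Finset V} {w : V ≃ₗ[ℝ] V} (hw : ∃ L, IsWordOn A L ∧ L.prod = w)
    (h : lenW A w = 0) : w = 1 := by
  obtain ⟨L, hL, hlen, hp⟩ := lenW_min hw
  rw [h, List.length_eq_zero_iff] at hlen
  rw [hlen, List.prod_nil] at hp
  exact hp.symm

lemma conj_trick (u v : V ≃ₗ[ℝ] V) (h : v * v = 1) : u * v * u⁻¹ * u * v = u := by
  rw [mul_assoc (u * v), inv_mul_cancel, mul_one, mul_assoc, h, mul_one]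

/-- The deletion condition. -/
lemma deletion (hΦ : IsIrredRootSystem Φ) (hΔ : IsBase Φ Δ) {A : Finset V} (hA : A ⊆ Δ)
    {a : V} (ha : a ∈ A) :
    ∀ L : List (V ≃ₗ[ℝ] V), IsWordOn A L → -(L.prod a) ∈ posRoots Φ Δ →
      ∃ L', IsWordOn A L' ∧ L'.length + 1 = L.length ∧ L'.prod = L.prod * rf a := by
  intro L
  induction L with
  | nil =>
    intro _ hneg
    rw [List.prod_nil, oneApply] at hneg
    exact absurd hneg fun h => not_pos_both hΦ hΔ (simple_pos hΔ (hA ha)) h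
  | cons s L ih =>
    intro hL hneg
    obtain ⟨b, hbA, hs⟩ := hL s List.mem_cons_self
    have hLw : IsWordOn A L := fun x hx => hL x (List.mem_cons_of_mem _ hx)
    have hu : L.prod ∈ weylGroup Φ := word_prod_mem_weyl hΔ hA L hLw
    have haΦ : a ∈ Φ := hΔ.1 (hA ha)
    rcases pos_or_neg hΦ hΔ (weyl_maps hΦ hu haΦ) with hpos | hneg2
    · rw [List.prod_cons, mulApply] at hneg
      have hsneg : rf b (L.prod a) ∉ posRoots Φ Δ :=
        fun hmem => not_pos_both hΦ hΔ hmem (hs ▸ hneg)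
      have hba : L.prod a = b := rf_simple_neg_only hΦ hΔ (hA hbA) hpos hsneg
      refine ⟨L, hLw, by simp [List.length_cons], ?_⟩
      rw [List.prod_cons, hs, ← hba, rf_conj hΦ hu a]
      exact (conj_trick _ _ (rf_mul_self a)).symm
    · obtain ⟨M, hM, hlen, hp⟩ := ih hLw hneg2
      refine ⟨s :: M, ?_, by simp [List.length_cons, ← hlen], ?_⟩
      · intro x hx
        rcases List.mem_cons.mp hx with h | h
        · exact ⟨b, hbA, h ▸ hs⟩
        · exact hM x h
      · rw [List.prod_cons, hp, List.prod_cons, mul_assoc]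

lemma lenW_mul_rf_neg_eq (hΦ : IsIrredRootSystem Φ) (hΔ : IsBase Φ Δ) {A : Finset V}
    (hA : A ⊆ Δ) {a : V} (ha : a ∈ A) {w : V ≃ₗ[ℝ] V}
    (hw : ∃ L, IsWordOn A L ∧ L.prod = w) (hneg : -(w a) ∈ posRoots Φ Δ) :
    (∃ L, IsWordOn A L ∧ L.prod = w * rf a) ∧ lenW A (w * rf a) + 1 = lenW A w := by
  obtain ⟨L, hL, hlen, hp⟩ := lenW_min hw
  obtain ⟨L', hL', hlen', hp'⟩ := deletion hΦ hΔ hA ha L hL (by rw [hp]; exact hneg)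
  rw [hp] at hp'
  have h1 : lenW A (w * rf a) ≤ L'.length := lenW_le hL' hp'
  obtain ⟨M, hM, hMlen, hMp⟩ := lenW_min ⟨L', hL', hp'⟩
  have h2 : lenW A w ≤ M.length + 1 := by
    have hword : IsWordOn A (M ++ [rf a]) := isWordOn_append hM
      (fun x hx => by rw [List.mem_singleton] at hx; exact ⟨a, ha, hx⟩)
    have hprod : (M ++ [rf a]).prod = w := by
      rw [List.prod_append, List.prod_cons, List.prod_nil, mul_one, hMp, mul_assoc,
        rf_mul_self, mul_one]
    have := lenW_le hword hprod
    simpa using this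
  exact ⟨⟨L', hL', hp'⟩, by omega⟩

lemma lenW_mul_rf_pos_eq (hΦ : IsIrredRootSystem Φ) (hΔ : IsBase Φ Δ) {A : Finset V}
    (hA : A ⊆ Δ) {a : V} (ha : a ∈ A) {w : V ≃ₗ[ℝ] V}
    (hw : ∃ L, IsWordOn A L ∧ L.prod = w) (hpos : w a ∈ posRoots Φ Δ) :
    (∃ L, IsWordOn A L ∧ L.prod = w * rf a) ∧ lenW A (w * rf a) = lenW A w + 1 := by
  have haΦ : a ∈ Φ := hΔ.1 (hA ha)
  have ha0 : a ≠ 0 := root_ne_zero hΦ haΦ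
  have hw' : ∃ L, IsWordOn A L ∧ L.prod = w * rf a := by
    obtain ⟨L, hL, hp⟩ := hw
    refine ⟨L ++ [rf a], isWordOn_append hL
      (fun x hx => by rw [List.mem_singleton] at hx; exact ⟨a, ha, hx⟩), ?_⟩
    rw [List.prod_append, List.prod_cons, List.prod_nil, mul_one, hp]
  have hneg' : -((w * rf a) a) ∈ posRoots Φ Δ := by
    rw [mulApply, rf_self a ha0, map_neg, neg_neg]
    exact hpos
  have hkey := (lenW_mul_rf_neg_eq hΦ hΔ hA ha hw' hneg').2
  rw [mul_assoc, rf_mul_self, mul_one] at hkey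
  exact ⟨hw', hkey.symm⟩

lemma exists_neg_simple (hΦ : IsIrredRootSystem Φ) (hΔ : IsBase Φ Δ) {A : Finset V}
    (hA : A ⊆ Δ) {w : V ≃ₗ[ℝ] V} (hw : ∃ L, IsWordOn A L ∧ L.prod = w) (hne : w ≠ 1) :
    ∃ a ∈ A, -(w a) ∈ posRoots Φ Δ := by
  obtain ⟨L, hL, hlen, hp⟩ := lenW_min hw
  rcases List.eq_nil_or_concat L with rfl | ⟨M, s, rfl⟩
  · rw [List.prod_nil] at hp
    exact absurd hp.symm hne
  · obtain ⟨a, ha, hs⟩ := hL s (by simp [List.concat_eq_append])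
    refine ⟨a, ha, ?_⟩
    by_contra hcon
    have hwmem : w ∈ weylGroup Φ := by
      rw [← hp]
      exact word_prod_mem_weyl hΔ hA _ hL
    have hwa : w a ∈ posRoots Φ Δ :=
      (pos_or_neg hΦ hΔ (weyl_maps hΦ hwmem (hΔ.1 (hA ha)))).resolve_right hcon
    have h2 := (lenW_mul_rf_pos_eq hΦ hΔ hA ha hw hwa).2
    have h3 : lenW A (w * rf a) ≤ M.length := by
      refine lenW_le (L := M) (fun x hx => hL x (by simp [List.concat_eq_append, hx])) ?_
      rw [← hp, List.concat_eq_append, List.prod_append, List.prod_cons, List.prod_nil,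
        mul_one, hs, mul_assoc, rf_mul_self, mul_one]
    have h4 : M.length + 1 = lenW A w := by
      rw [← hlen, List.concat_eq_append, List.length_append]
      simp
    omega

lemma lenW_eq_Ninv (hΦ : IsIrredRootSystem Φ) (hΔ : IsBase Φ Δ) {w : V ≃ₗ[ℝ] V}
    (hw : ∃ L, IsWordOn Δ L ∧ L.prod = w) : lenW Δ w = Ninv Φ Δ w := by
  have hge : Ninv Φ Δ w ≤ lenW Δ w := by
    obtain ⟨L, hL, hlen, hp⟩ := lenW_min hw
    calc Ninv Φ Δ w = Ninv Φ Δ L.prod := by rw [hp]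
    _ ≤ L.length := Ninv_le_word hΦ hΔ L hL
    _ = lenW Δ w := hlen
  have hle : ∀ n : ℕ, ∀ w : V ≃ₗ[ℝ] V, (∃ L, IsWordOn Δ L ∧ L.prod = w) →
      Ninv Φ Δ w = n → lenW Δ w ≤ n := by
    intro n
    induction n using Nat.strong_induction_on with
    | _ n ih =>
      intro w hw hN
      by_cases h1 : w = 1
      · subst h1
        rw [lenW_one]
        exact Nat.zero_le n
      · obtain ⟨a, ha, hneg⟩ := exists_neg_simple hΦ hΔ (Finset.Subset.refl Δ) hw h1
        have hdel := lenW_mul_rf_neg_eq hΦ hΔ (Finset.Subset.refl Δ) ha hw hneg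
        have hN2 := Ninv_mul_rf_neg hΦ hΔ ha hneg
        have hlt : Ninv Φ Δ (w * rf a) < n := by omega
        have hih := ih _ hlt (w * rf a) hdel.1 rfl
        omega
  exact le_antisymm (hle _ w hw rfl) hge

end

section
variable {Φ : Set V} {Δ : Finset V} {t : V}

lemma weyl_maps_inv (hΦ : IsIrredRootSystem Φ) {w : V ≃ₗ[ℝ] V} (hw : w ∈ weylGroup Φ)
    {β : V} (hβ : β ∈ Φ) : w⁻¹ β ∈ Φ := (weyl_good hΦ hw).2.2.2 β hβ

open Classical in
lemma sum_ite_smul {a : V} (ha : a ∈ Δ) (r : ℝ) :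
    ∑ x ∈ Δ, (if x = a then r else 0) • x = r • a := by
  rw [Finset.sum_congr rfl (g := fun x => if x = a then r • a else 0)
    (fun x _ => by by_cases h : x = a <;> simp [h])]
  simp [Finset.sum_ite_eq', ha]

open Classical in
lemma highest_dom (hΦ : IsIrredRootSystem Φ) (hΔ : IsBase Φ Δ) (ht : IsHighestRoot Φ Δ t)
    {a : V} (ha : a ∈ Δ) : 0 ≤ ⟪t, a⟫ := by
  by_contra hcon
  push_neg at hcon
  have haΦ : a ∈ Φ := hΔ.1 ha
  have htΦ : t ∈ Φ := ht.1
  obtain ⟨k, hk⟩ := hΦ.crystallographic a haΦ t htΦ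
  have hrmem : rf a t ∈ Φ := by rw [rf_apply]; exact hΦ.reflect_mem a haΦ t htΦ
  obtain ⟨c, hc⟩ := ht.2 (rf a t) hrmem
  have hdiff : t - rf a t = (k : ℝ) • a := by rw [rf_apply, hk]; abel
  have hkneg : (k : ℝ) < 0 := by
    rw [← hk]
    have h3 : (0:ℝ) < ⟪a, a⟫ := inner_self_pos' (root_ne_zero hΦ haΦ)
    have h4 : ⟪a, t⟫ < 0 := by rwa [real_inner_comm]
    exact div_neg_of_neg_of_pos (by linarith) h3
  have huniq := coeff_unique hΔ (fun x => (c x : ℝ)) (fun x => if x = a then (k:ℝ) else 0)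
    (hc.symm.trans (hdiff.trans (sum_ite_smul ha (k:ℝ)).symm))
  have h5 : (c a : ℝ) = (k : ℝ) := by
    have := huniq a ha
    simpa using this
  have h6 : (0:ℝ) ≤ (c a : ℝ) := Nat.cast_nonneg _
  linarith

lemma pos_inner_nonneg (hΦ : IsIrredRootSystem Φ) (hΔ : IsBase Φ Δ)
    (ht : IsHighestRoot Φ Δ t) {γ : V} (hγ : γ ∈ posRoots Φ Δ) : 0 ≤ ⟪t, γ⟫ := by
  obtain ⟨_, c, hc⟩ := hγ
  rw [hc, inner_sum]
  refine Finset.sum_nonneg fun x hx => ?_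
  rw [real_inner_smul_right]
  exact mul_nonneg (Nat.cast_nonneg _) (highest_dom hΦ hΔ ht hx)

/-- Key geometric fact: if `δ` is positive with `x⁻¹ δ` negative, where `x t = α`,
then `s_α δ` is still positive. -/
lemma key_fact (hΦ : IsIrredRootSystem Φ) (hΔ : IsBase Φ Δ) (ht : IsHighestRoot Φ Δ t)
    {x : V ≃ₗ[ℝ] V} (hx : x ∈ weylGroup Φ) {α : V} (hα : α ∈ posRoots Φ Δ) (hxt : x t = α)
    {δ : V} (hδ : δ ∈ posRoots Φ Δ) (hneg : -(x⁻¹ δ) ∈ posRoots Φ Δ) :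
    rf α δ ∈ posRoots Φ Δ := by
  have hαΦ : α ∈ Φ := hα.1
  have hδΦ : δ ∈ Φ := hδ.1
  have e1 : ⟪α, δ⟫ = ⟪t, x⁻¹ δ⟫ := by
    conv_lhs => rw [← hxt, ← invApply x δ]
    exact weyl_inner hΦ hx t (x⁻¹ δ)
  have e2 : 0 ≤ ⟪t, -(x⁻¹ δ)⟫ := pos_inner_nonneg hΦ hΔ ht hneg
  rw [inner_neg_right] at e2
  have h1 : ⟪α, δ⟫ ≤ 0 := by linarith [e1]
  obtain ⟨k, hk⟩ := hΦ.crystallographic α hαΦ δ hδΦ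
  have hkle : (k : ℝ) ≤ 0 := by
    rw [← hk]
    have h3 : (0:ℝ) < ⟪α, α⟫ := inner_self_pos' (root_ne_zero hΦ hαΦ)
    exact div_nonpos_of_nonpos_of_nonneg (by linarith) (le_of_lt h3)
  have hkz : k ≤ 0 := by exact_mod_cast hkle
  have hmem : rf α δ ∈ Φ := by rw [rf_apply]; exact hΦ.reflect_mem α hαΦ δ hδΦ
  obtain ⟨_, c, hc⟩ := id hδ
  obtain ⟨_, d, hd⟩ := id hα
  have hrep : rf α δ = ∑ y ∈ Δ, ((c y : ℝ) - (k : ℝ) * (d y : ℝ)) • y := by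
    rw [rf_apply, hk, hc, hd, Finset.smul_sum, ← Finset.sum_sub_distrib]
    refine Finset.sum_congr rfl fun y hy => ?_
    rw [smul_smul, ← sub_smul]
  refine mem_pos_of_int hmem (fun y => (c y : ℤ) - k * (d y : ℤ)) ?_ ?_
  · rw [hrep]
    refine Finset.sum_congr rfl fun y hy => ?_
    push_cast
    ring_nf
  · intro y hy
    show (0:ℤ) ≤ (c y : ℤ) - k * (d y : ℤ)
    have h4 : (0:ℤ) ≤ (c y : ℤ) := Int.ofNat_nonneg _
    have h5 : (0:ℤ) ≤ (d y : ℤ) := Int.ofNat_nonneg _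
    nlinarith

/-- Length additivity via inversion counting. -/
lemma Ninv_add (hΦ : IsIrredRootSystem Φ) (hΔ : IsBase Φ Δ) (ht : IsHighestRoot Φ Δ t)
    {x : V ≃ₗ[ℝ] V} (hx : x ∈ weylGroup Φ) {α : V} (hα : α ∈ posRoots Φ Δ) (hxt : x t = α) :
    Ninv Φ Δ (rf α * x) = Ninv Φ Δ (rf α) + Ninv Φ Δ x := by
  have hset : invRoots Φ Δ (rf α * x) =
      invRoots Φ Δ x ∪ (⇑(x⁻¹) '' invRoots Φ Δ (rf α)) := by
    ext γ
    simp only [invRoots, Set.mem_setOf_eq, Set.mem_union, Set.mem_image]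
    constructor
    · rintro ⟨hγp, hγn⟩
      by_cases hc : -(x γ) ∈ posRoots Φ Δ
      · exact Or.inl ⟨hγp, hc⟩
      · have hxγΦ : x γ ∈ Φ := weyl_maps hΦ hx hγp.1
        have hxγp : x γ ∈ posRoots Φ Δ := (pos_or_neg hΦ hΔ hxγΦ).resolve_right hc
        exact Or.inr ⟨x γ, ⟨hxγp, by rwa [mulApply] at hγn⟩, invApply' x γ⟩
    · rintro (⟨hγp, hγn⟩ | ⟨δ, ⟨hδp, hδn⟩, rfl⟩)
      · refine ⟨hγp, ?_⟩
        rw [mulApply]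
        have h2 : -(x⁻¹ (-(x γ))) ∈ posRoots Φ Δ := by
          rw [map_neg, invApply', neg_neg]
          exact hγp
        have h3 := key_fact hΦ hΔ ht hx hα hxt hγn h2
        rwa [map_neg] at h3
      · have hδpos : x⁻¹ δ ∈ posRoots Φ Δ := by
          by_contra hcc
          have hin : x⁻¹ δ ∈ Φ := weyl_maps_inv hΦ hx hδp.1
          have hnn : -(x⁻¹ δ) ∈ posRoots Φ Δ := (pos_or_neg hΦ hΔ hin).resolve_left hcc
          exact not_pos_both hΦ hΔ (key_fact hΦ hΔ ht hx hα hxt hδp hnn) hδn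
        refine ⟨hδpos, ?_⟩
        rw [mulApply, invApply x δ]
        exact hδn
  have hdisj : Disjoint (invRoots Φ Δ x) (⇑(x⁻¹) '' invRoots Φ Δ (rf α)) := by
    rw [Set.disjoint_left]
    rintro γ ⟨hγp, hγn⟩ ⟨δ, ⟨hδp, _⟩, rfl⟩
    rw [invApply] at hγn
    exact not_pos_both hΦ hΔ hδp hγn
  rw [Ninv, hset, Set.ncard_union_eq hdisj (invRoots_finite hΦ x)
    ((invRoots_finite hΦ (rf α)).image _), Set.ncard_image_of_injective _ (EquivLike.injective x⁻¹)]
  exact Nat.add_comm _ _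
end

section
variable {Φ : Set V} {Δ : Finset V} {t : V}

/-- Support on the simple roots orthogonal to `t`. -/
def ISupp (Δ : Finset V) (t : V) (γ : V) : Prop :=
  ∃ c : V → ℤ, (∀ a ∈ Δ, ⟪t, a⟫ ≠ 0 → c a = 0) ∧ γ = ∑ a ∈ Δ, (c a : ℝ) • a

open Classical in
lemma isupp_simple {a : V} (ha : a ∈ Δ) (hta : ⟪t, a⟫ = 0) : ISupp Δ t a := by
  refine ⟨fun x => if x = a then 1 else 0, fun b hb htb => ?_, ?_⟩
  · by_cases hba : b = a
    · exact absurd (hba ▸ htb) (fun h => h hta)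
    · simp [hba]
  · have h1 : ∀ x ∈ Δ, (((if x = a then 1 else 0 : ℤ)) : ℝ) • x
        = (if x = a then (1:ℝ) else 0) • x := fun x _ => by by_cases h : x = a <;> simp [h]
    rw [Finset.sum_congr rfl h1, sum_ite_smul ha 1, one_smul]

lemma isupp_neg {γ : V} (h : ISupp Δ t γ) : ISupp Δ t (-γ) := by
  obtain ⟨c, hsupp, hrep⟩ := h
  refine ⟨fun x => -c x, fun b hb htb => by show -c b = 0; rw [hsupp b hb htb, neg_zero], ?_⟩
  rw [hrep, ← Finset.sum_neg_distrib]
  exact Finset.sum_congr rfl fun x _ => by push_cast; rw [neg_smul]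

open Classical in
lemma isupp_rf (hΦ : IsIrredRootSystem Φ) (hΔ : IsBase Φ Δ) {b γ : V} (hb : b ∈ Δ)
    (htb : ⟪t, b⟫ = 0) (hγΦ : γ ∈ Φ) (hγ : ISupp Δ t γ) : ISupp Δ t (rf b γ) := by
  obtain ⟨c, hsupp, hrep⟩ := hγ
  obtain ⟨k, hk⟩ := hΦ.crystallographic b (hΔ.1 hb) γ hγΦ
  refine ⟨fun x => c x - if x = b then k else 0, fun a ha hta => ?_, ?_⟩
  · by_cases hab : a = b
    · exact absurd htb (hab ▸ hta)
    · simp [hab, hsupp a ha hta]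
  · rw [rf_apply, hk, hrep, ← sum_ite_smul hb (k:ℝ), ← Finset.sum_sub_distrib]
    refine Finset.sum_congr rfl fun x hx => ?_
    by_cases h : x = b <;> simp [h, sub_smul]

lemma isupp_word (hΦ : IsIrredRootSystem Φ) (hΔ : IsBase Φ Δ) {I : Finset V}
    (hI : ∀ a ∈ I, a ∈ Δ ∧ ⟪t, a⟫ = 0) :
    ∀ L : List (V ≃ₗ[ℝ] V), IsWordOn I L → ∀ γ, γ ∈ Φ → ISupp Δ t γ →
      L.prod γ ∈ Φ ∧ ISupp Δ t (L.prod γ) := by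
  intro L
  induction L with
  | nil =>
    intro _ γ h1 h2
    rw [List.prod_nil, oneApply]
    exact ⟨h1, h2⟩
  | cons s L ih =>
    intro hL γ h1 h2
    obtain ⟨b, hbI, hs⟩ := hL s List.mem_cons_self
    obtain ⟨h3, h4⟩ := ih (fun x hx => hL x (List.mem_cons_of_mem _ hx)) γ h1 h2
    rw [List.prod_cons, mulApply, hs]
    obtain ⟨hbΔ, htb⟩ := hI b hbI
    refine ⟨?_, isupp_rf hΦ hΔ hbΔ htb h3 h4⟩
    rw [rf_apply]
    exact hΦ.reflect_mem b (hΔ.1 hbΔ) _ h3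

lemma minCoset_apply (hΔ : IsBase Φ Δ) {w : V ≃ₗ[ℝ] V} (hw : w ∈ minCosetReps Φ Δ t) {γ : V}
    (hγp : γ ∈ posRoots Φ Δ) (hγs : ISupp Δ t γ) : w γ ∈ posRoots Φ Δ := by
  obtain ⟨c, hsupp, hrep⟩ := hγs
  obtain ⟨hγΦ, d, hd⟩ := id hγp
  have huniq := coeff_unique hΔ (fun x => (d x : ℝ)) (fun x => ((c x : ℤ) : ℝ))
    (hd.symm.trans hrep)
  refine hw.2 γ hγΦ ⟨d, fun a haΔ hta => ?_, hd⟩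
  have h1 : (d a : ℝ) = ((c a : ℤ) : ℝ) := huniq a haΔ
  rw [hsupp a haΔ hta] at h1
  have h2 : (d a : ℝ) = 0 := by simpa using h1
  exact_mod_cast h2

/-- Steinberg's argument: an element of the Weyl group fixing the (dominant) highest root
is a product of reflections in the simple roots orthogonal to it. -/
lemma steinberg (hΦ : IsIrredRootSystem Φ) (hΔ : IsBase Φ Δ) (ht : IsHighestRoot Φ Δ t)
    (I : Finset V) (hI : ∀ a, a ∈ I ↔ a ∈ Δ ∧ ⟪t, a⟫ = 0) :
    ∀ n : ℕ, ∀ u : V ≃ₗ[ℝ] V, u ∈ weylGroup Φ → lenW Δ u = n → u t = t →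
      ∃ L, IsWordOn I L ∧ L.prod = u := by
  intro n
  induction n using Nat.strong_induction_on with
  | _ n ih =>
    intro u hu hlen hut
    by_cases h1 : u = 1
    · exact ⟨[], isWordOn_nil, by rw [List.prod_nil, h1]⟩
    · have hword := weyl_word hΦ hΔ hu
      obtain ⟨a, ha, hneg⟩ := exists_neg_simple hΦ hΔ (Finset.Subset.refl Δ) hword h1
      have hta : ⟪t, a⟫ = 0 := by
        have hd1 : 0 ≤ ⟪t, a⟫ := highest_dom hΦ hΔ ht ha
        have e1 : ⟪t, a⟫ = ⟪t, u a⟫ := by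
          conv_lhs => rw [← weyl_inner hΦ hu t a, hut]
        have hd2 : 0 ≤ ⟪t, -(u a)⟫ := pos_inner_nonneg hΦ hΔ ht hneg
        rw [inner_neg_right] at hd2
        linarith
      have hfix : rf a t = t := rf_orth_fix a t (by rwa [real_inner_comm])
      have hu' : u * rf a ∈ weylGroup Φ := mul_mem hu (rf_mem_weyl (hΔ.1 ha))
      have hlt := (lenW_mul_rf_neg_eq hΦ hΔ (Finset.Subset.refl Δ) ha hword hneg).2
      obtain ⟨M, hM, hMp⟩ := ih (lenW Δ (u * rf a)) (by omega) (u * rf a) hu' rfl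
        (by rw [mulApply, hfix, hut])
      refine ⟨M ++ [rf a], isWordOn_append hM
        (fun x hx => by rw [List.mem_singleton] at hx; exact ⟨a, (hI a).mpr ⟨ha, hta⟩, hx⟩), ?_⟩
      rw [List.prod_append, List.prod_cons, List.prod_nil, mul_one, hMp, mul_assoc,
        rf_mul_self, mul_one]
end

/-- For a positive long root `α`, with `x_α` (resp. `x_{−α}`) the
minimal coset representative sending the highest root `α̃` to `α` (resp. `−α`), one has
`x_{−α} = s_α x_α` and `l(x_{−α}) = l(s_α) + l(x_α)`. -/
theorem minCosetRep_neg_eq_reflection_mul (Φ : Set V) (hΦ : IsIrredRootSystem Φ)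
    (Δ : Finset V) (hΔ : IsBase Φ Δ)
    (r : ℝ) (hr : IsGreatest {x : ℝ | ∃ α ∈ Φ, x = ⟪α, α⟫} r)
    (t : V) (ht : IsHighestRoot Φ Δ t)
    (α : V) (hα : α ∈ posRoots Φ Δ) (hαlg : ⟪α, α⟫ = r)
    (s : V ≃ₗ[ℝ] V) (hs : ∀ v, s v = v - (2 * ⟪α, v⟫ / ⟪α, α⟫) • α)
    (xα : V ≃ₗ[ℝ] V) (hxα : xα ∈ minCosetReps Φ Δ t) (hxαt : xα t = α)
    (xnα : V ≃ₗ[ℝ] V) (hxnα : xnα ∈ minCosetReps Φ Δ t) (hxnαt : xnα t = -α) :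
    xnα = s * xα ∧ len Δ xnα = len Δ s + len Δ xα := by
  classical
  have hsrf : s = rf α := LinearEquiv.ext fun v => (hs v).trans (rf_apply α v).symm
  have hαΦ : α ∈ Φ := hα.1
  have hα0 : α ≠ 0 := root_ne_zero hΦ hαΦ
  have hsW : s ∈ weylGroup Φ := hsrf ▸ rf_mem_weyl hαΦ
  have hxαW : xα ∈ weylGroup Φ := hxα.1
  have hxnαW : xnα ∈ weylGroup Φ := hxnα.1
  have hw2W : s * xα ∈ weylGroup Φ := mul_mem hsW hxαW
  -- `s * xα` is a minimal coset representative
  have hw2 : s * xα ∈ minCosetReps Φ Δ t := by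
    refine ⟨hw2W, fun γ hγΦ hγc => ?_⟩
    obtain ⟨c, hsupp, hrep⟩ := hγc
    have hγpos : xα γ ∈ posRoots Φ Δ := hxα.2 γ hγΦ ⟨c, hsupp, hrep⟩
    have horth : ⟪t, γ⟫ = 0 := by
      rw [hrep, inner_sum]
      refine Finset.sum_eq_zero fun a ha => ?_
      rw [real_inner_smul_right]
      by_cases h : ⟪t, a⟫ = 0
      · rw [h]; ring
      · rw [hsupp a ha h]; simp
    have horth2 : ⟪α, xα γ⟫ = 0 := by
      rw [← hxαt, weyl_inner hΦ hxαW t γ]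
      exact horth
    rw [mulApply, hsrf, rf_orth_fix α (xα γ) horth2]
    exact hγpos
  set I : Finset V := Δ.filter (fun a => ⟪t, a⟫ = 0) with hIdef
  have hIiff : ∀ a, a ∈ I ↔ a ∈ Δ ∧ ⟪t, a⟫ = 0 := fun a => Finset.mem_filter
  have hIm : ∀ a ∈ I, a ∈ Δ ∧ ⟪t, a⟫ = 0 := fun a haI => (hIiff a).mp haI
  have hIsub : I ⊆ Δ := fun a haI => ((hIiff a).mp haI).1
  have hw2t : (s * xα) t = -α := by rw [mulApply, hxαt, hsrf, rf_self α hα0]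
  set u : V ≃ₗ[ℝ] V := (s * xα)⁻¹ * xnα with hu
  have huW : u ∈ weylGroup Φ := mul_mem (inv_mem hw2W) hxnαW
  have hut : u t = t := by
    rw [hu, mulApply, hxnαt, ← hw2t]
    exact invApply' (s * xα) t
  obtain ⟨M, hM, hMp⟩ := steinberg hΦ hΔ ht I hIiff (lenW Δ u) u huW rfl hut
  have hu1 : u = 1 := by
    by_contra hne
    obtain ⟨a, haI, hneg⟩ := exists_neg_simple hΦ hΔ hIsub ⟨M, hM, hMp⟩ hne
    obtain ⟨haΔ, hta⟩ := hIm a haI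
    have haΦ : a ∈ Φ := hΔ.1 haΔ
    have h1 : u a ∈ Φ ∧ ISupp Δ t (u a) := by
      have h2 := isupp_word hΦ hΔ hIm M hM a haΦ (isupp_simple haΔ hta)
      rwa [hMp] at h2
    have hgs : ISupp Δ t (-(u a)) := isupp_neg h1.2
    have hw1a : xnα a ∈ posRoots Φ Δ :=
      minCoset_apply hΔ hxnα (simple_pos hΔ haΔ) (isupp_simple haΔ hta)
    have hw2g : (s * xα) (-(u a)) ∈ posRoots Φ Δ := minCoset_apply hΔ hw2 hneg hgs
    have h0 : u a = (s * xα)⁻¹ (xnα a) := by rw [hu, mulApply]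
    have hua : (s * xα) (u a) = xnα a := by rw [h0]; exact invApply (s * xα) (xnα a)
    have hkey : -(xnα a) = (s * xα) (-(u a)) := by rw [map_neg, hua]
    exact not_pos_both hΦ hΔ hw1a (hkey ▸ hw2g)
  have hfinal : xnα = s * xα := (inv_mul_eq_one.mp hu1).symm
  refine ⟨hfinal, ?_⟩
  have hxnαword := weyl_word hΦ hΔ hxnαW
  have hsword := weyl_word hΦ hΔ hsW
  have hxαword := weyl_word hΦ hΔ hxαW
  rw [len_eq_lenW, len_eq_lenW, len_eq_lenW, lenW_eq_Ninv hΦ hΔ hxnαword,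
    lenW_eq_Ninv hΦ hΔ hsword, lenW_eq_Ninv hΦ hΔ hxαword, hfinal, hsrf]
  exact Ninv_add hΦ hΔ ht hxαW hα hxαt
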